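/- arXiv:1105.4224 — 3 statements merged into one kernel-verified Lean document; each statement's English description precedes it below -/
import Mathlib

section
/- For any two intervals x = (x⁻, x⁺) and y = (y⁻, y⁺), exactly one of the 13 basic Allen relations holds between x and y; that is, the 13 Allen relations are jointly exhaustive and pairwise disjoint on the set of intervals. -/
/-- An interval: a pair (p, q) of real numbers with p < q. -/
def Intvl : Type := {x : ℝ × ℝ // x.1 < x.2}

/-- The 13 basic Allen (Interval Algebra) relations. -/
inductive Allen : Type
  | b | bi | m | mi | o | oi | s | si | d | di | f | fi | eq
  deriving DecidableEq

/-- Interpretation of the basic Allen relations. -/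
def Allen.holds : Allen → Intvl → Intvl → Prop
  | .b,  x, y => x.val.2 < y.val.1
  | .bi, x, y => y.val.2 < x.val.1
  | .m,  x, y => x.val.2 = y.val.1
  | .mi, x, y => y.val.2 = x.val.1
  | .o,  x, y => x.val.1 < y.val.1 ∧ y.val.1 < x.val.2 ∧ x.val.2 < y.val.2
  | .oi, x, y => y.val.1 < x.val.1 ∧ x.val.1 < y.val.2 ∧ y.val.2 < x.val.2
  | .s,  x, y => x.val.1 = y.val.1 ∧ x.val.2 < y.val.2
  | .si, x, y => y.val.1 = x.val.1 ∧ y.val.2 < x.val.2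
  | .d,  x, y => y.val.1 < x.val.1 ∧ x.val.2 < y.val.2
  | .di, x, y => x.val.1 < y.val.1 ∧ y.val.2 < x.val.2
  | .f,  x, y => y.val.1 < x.val.1 ∧ x.val.2 = y.val.2
  | .fi, x, y => x.val.1 < y.val.1 ∧ y.val.2 = x.val.2
  | .eq, x, y => x.val.1 = y.val.1 ∧ x.val.2 = y.val.2

/-- the 13 basic Allen relations are jointly exhaustive and
pairwise disjoint: exactly one of them holds between any two intervals. -/
theorem allen_JEPD (x y : Intvl) : ∃! r : Allen, r.holds x y := by
  obtain ⟨⟨a, b⟩, hx⟩ := x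
  obtain ⟨⟨c, d⟩, hy⟩ := y
  simp only at hx hy
  have hex : ∃ r : Allen, r.holds ⟨(a, b), hx⟩ ⟨(c, d), hy⟩ := by
    rcases lt_trichotomy b c with h | h | h
    · exact ⟨.b, h⟩
    · exact ⟨.m, h⟩
    · rcases lt_trichotomy d a with h' | h' | h'
      · exact ⟨.bi, h'⟩
      · exact ⟨.mi, h'⟩
      · rcases lt_trichotomy a c with h1 | h1 | h1 <;>
          rcases lt_trichotomy b d with h2 | h2 | h2
        · exact ⟨.o, h1, h, h2⟩
        · exact ⟨.fi, h1, h2.symm⟩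
        · exact ⟨.di, h1, h2⟩
        · exact ⟨.s, h1, h2⟩
        · exact ⟨.eq, h1, h2⟩
        · exact ⟨.si, h1.symm, h2⟩
        · exact ⟨.d, h1, h2⟩
        · exact ⟨.f, h1, h2⟩
        · exact ⟨.oi, h1, h', h2⟩
  obtain ⟨r, hr⟩ := hex
  refine ⟨r, hr, fun r' hr' => ?_⟩
  cases r <;> cases r' <;>
    first
    | rfl
    | (simp only [Allen.holds] at hr hr'
       first | obtain ⟨h1, h2, h3⟩ := hr | obtain ⟨h1, h2⟩ := hr | skip
       first | obtain ⟨g1, g2, g3⟩ := hr' | obtain ⟨g1, g2⟩ := hr' | skip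
       exfalso; linarith)
end

section
/- For any intervals x, y, z there exist intervals x', y', z' whose endpoints are integers in {0, 1, 2, 3, 4, 5} such that the basic Allen relation holding between x' and y' is the same as that between x and y, the relation between y' and z' is the same as that between y and z, and the relation between x' and z' is the same as that between x and z. (In other words, the domain D₆ of intervals with integer endpoints in [0, 6) is 3-complete for the Interval Algebra.) -/
/-- An interval belongs to the subdomain D_M: integer endpoints in [0, M). -/
def inD (M : ℤ) (x : Intvl) : Prop :=
  ∃ p q : ℤ, (0 ≤ p) ∧ (q < M) ∧ x.val.1 = (p : ℝ) ∧ x.val.2 = (q : ℝ)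

/-- the subdomain D₆ of intervals with integer endpoints in [0, 6)
is 3-complete for the Interval Algebra. -/
theorem D6_three_complete (x y z : Intvl) :
    ∃ x' y' z' : Intvl, inD 6 x' ∧ inD 6 y' ∧ inD 6 z' ∧
      (∀ r : Allen,
        (r.holds x y ↔ r.holds x' y') ∧
        (r.holds y z ↔ r.holds y' z') ∧
        (r.holds x z ↔ r.holds x' z')) := by
  classical
  set s : Finset ℝ :=
    {x.val.1, x.val.2, y.val.1, y.val.2, z.val.1, z.val.2} with hs
  set F : ℝ → ℤ := fun t => ((s.filter (fun u => u < t)).card : ℤ) with hF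
  -- F is strictly monotone on s
  have Flt : ∀ u v : ℝ, u ∈ s → v ∈ s → (u < v ↔ F u < F v) := by
    intro u v hu hv
    have mono : ∀ a b : ℝ, a ∈ s → a < b → F a < F b := by
      intro a b ha hab
      have hsub : s.filter (fun u => u < a) ⊂ s.filter (fun u => u < b) := by
        constructor
        · intro t ht
          simp only [Finset.mem_filter] at ht ⊢
          exact ⟨ht.1, lt_trans ht.2 hab⟩
        · intro hcon
          have : a ∈ s.filter (fun u => u < b) := by
            simp only [Finset.mem_filter]; exact ⟨ha, hab⟩
          have := hcon this
          simp only [Finset.mem_filter] at this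
          exact lt_irrefl a this.2
      have := Finset.card_lt_card hsub
      simp only [hF]
      exact_mod_cast this
    constructor
    · exact mono u v hu
    · intro h
      by_contra hc
      push_neg at hc
      rcases lt_or_eq_of_le hc with h' | h'
      · exact absurd (mono v u hv h') (by omega)
      · subst h'; exact lt_irrefl _ h
  have Feq : ∀ u v : ℝ, u ∈ s → v ∈ s → (u = v ↔ F u = F v) := by
    intro u v hu hv
    constructor
    · rintro rfl; rfl
    · intro h
      rcases lt_trichotomy u v with h' | h' | h'
      · exact absurd ((Flt u v hu hv).1 h') (by omega)
      · exact h'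
      · exact absurd ((Flt v u hv hu).1 h') (by omega)
  have F0 : ∀ u : ℝ, 0 ≤ F u := by
    intro u; simp [hF]
  have F5 : ∀ u : ℝ, u ∈ s → F u ≤ 5 := by
    intro u hu
    have hsub : s.filter (fun v => v < u) ⊆ s.erase u := by
      intro t ht
      simp only [Finset.mem_filter] at ht
      exact Finset.mem_erase.2 ⟨ne_of_lt ht.2, ht.1⟩
    have h1 : (s.filter (fun v => v < u)).card ≤ (s.erase u).card :=
      Finset.card_le_card hsub
    have h2 : (s.erase u).card ≤ 5 := by
      have := Finset.card_erase_lt_of_mem hu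
      have hcard : s.card ≤ 6 := by
        simp only [hs]
        have h1 := Finset.card_insert_le x.val.1
          ({x.val.2, y.val.1, y.val.2, z.val.1, z.val.2} : Finset ℝ)
        have h2 := Finset.card_insert_le x.val.2
          ({y.val.1, y.val.2, z.val.1, z.val.2} : Finset ℝ)
        have h3 := Finset.card_insert_le y.val.1 ({y.val.2, z.val.1, z.val.2} : Finset ℝ)
        have h4 := Finset.card_insert_le y.val.2 ({z.val.1, z.val.2} : Finset ℝ)
        have h5 := Finset.card_insert_le z.val.1 ({z.val.2} : Finset ℝ)
        have h6 : ({z.val.2} : Finset ℝ).card = 1 := Finset.card_singleton _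
        omega
      omega
    simp only [hF]
    omega
  have hx1 : x.val.1 ∈ s := by simp [hs]
  have hx2 : x.val.2 ∈ s := by simp [hs]
  have hy1 : y.val.1 ∈ s := by simp [hs]
  have hy2 : y.val.2 ∈ s := by simp [hs]
  have hz1 : z.val.1 ∈ s := by simp [hs]
  have hz2 : z.val.2 ∈ s := by simp [hs]
  have flt : ∀ u v : ℝ, u ∈ s → v ∈ s → (u < v ↔ ((F u : ℝ) < (F v : ℝ))) := by
    intro u v hu hv
    rw [Flt u v hu hv]; exact_mod_cast Iff.rfl
  have feq : ∀ u v : ℝ, u ∈ s → v ∈ s → (u = v ↔ ((F u : ℝ) = (F v : ℝ))) := by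
    intro u v hu hv
    rw [Feq u v hu hv]; exact_mod_cast Iff.rfl
  refine ⟨⟨((F x.val.1 : ℝ), (F x.val.2 : ℝ)), (flt _ _ hx1 hx2).1 x.property⟩,
          ⟨((F y.val.1 : ℝ), (F y.val.2 : ℝ)), (flt _ _ hy1 hy2).1 y.property⟩,
          ⟨((F z.val.1 : ℝ), (F z.val.2 : ℝ)), (flt _ _ hz1 hz2).1 z.property⟩,
          ?_, ?_, ?_, ?_⟩
  · exact ⟨F x.val.1, F x.val.2, F0 _, by have := F5 _ hx2; omega, rfl, rfl⟩
  · exact ⟨F y.val.1, F y.val.2, F0 _, by have := F5 _ hy2; omega, rfl, rfl⟩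
  · exact ⟨F z.val.1, F z.val.2, F0 _, by have := F5 _ hz2; omega, rfl, rfl⟩
  · intro r
    refine ⟨?_, ?_, ?_⟩ <;> cases r <;> simp only [Allen.holds] <;>
      first
        | exact flt _ _ (by assumption) (by assumption)
        | exact feq _ _ (by assumption) (by assumption)
        | (refine and_congr ?_ ?_ <;>
            first
              | exact flt _ _ (by assumption) (by assumption)
              | exact feq _ _ (by assumption) (by assumption)
              | (refine and_congr ?_ ?_ <;>
                  first
                    | exact flt _ _ (by assumption) (by assumption)
                    | exact feq _ _ (by assumption) (by assumption)))
end

section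
/- For any two regions a, b (nonempty, bounded, regular closed subsets of ℝ²), exactly one of the 8 basic RCC-8 relations DC, EC, PO, TPP, NTPP, EQ, TPPi, NTPPi holds between a and b; that is, the 8 RCC-8 relations are jointly exhaustive and pairwise disjoint on the set of regions. -/
/-- A region: a nonempty, bounded, regular closed subset of the plane. -/
def Region : Type :=
  {a : Set (ℝ × ℝ) // a.Nonempty ∧ Bornology.IsBounded a ∧ a = closure (interior a)}

/-- The 8 basic RCC-8 relations. -/
inductive RCC8 : Type
  | DC | EC | PO | TPP | NTPP | EQ | TPPi | NTPPi
  deriving DecidableEq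

/-- Interpretation of the basic RCC-8 relations. -/
def RCC8.holds : RCC8 → Region → Region → Prop
  | .DC,    a, b => a.val ∩ b.val = ∅
  | .EC,    a, b => (a.val ∩ b.val).Nonempty ∧ interior a.val ∩ interior b.val = ∅
  | .PO,    a, b => ¬ a.val ⊆ b.val ∧ ¬ b.val ⊆ a.val ∧
      (interior a.val ∩ interior b.val).Nonempty
  | .TPP,   a, b => a.val ⊆ b.val ∧ a.val ≠ b.val ∧ ¬ a.val ⊆ interior b.val
  | .NTPP,  a, b => a.val ⊆ interior b.val
  | .EQ,    a, b => a.val = b.val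
  | .TPPi,  a, b => b.val ⊆ a.val ∧ b.val ≠ a.val ∧ ¬ b.val ⊆ interior a.val
  | .NTPPi, a, b => b.val ⊆ interior a.val

lemma Region.int_nonempty (a : Region) : (interior a.val).Nonempty := by
  by_contra h
  rw [Set.not_nonempty_iff_eq_empty] at h
  have := a.2.1
  rw [a.2.2.2, h, closure_empty] at this
  exact Set.not_nonempty_empty this

lemma Region.not_subset_interior_self (a : Region) : ¬ a.val ⊆ interior a.val := by
  intro h
  have heq : a.val = interior a.val := Set.Subset.antisymm h interior_subset
  have hclosed : IsClosed a.val := by rw [a.2.2.2]; exact isClosed_closure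
  have hopen : IsOpen a.val := by rw [heq]; exact isOpen_interior
  rcases isClopen_iff.mp ⟨hclosed, hopen⟩ with h0 | h1
  · exact a.2.1.ne_empty h0
  · have hb := a.2.2.1
    rw [h1] at hb
    exact NormedSpace.unbounded_univ ℝ (ℝ × ℝ) hb

lemma Region.int_int_nonempty {a b : Region} (h : a.val ⊆ b.val) :
    (interior a.val ∩ interior b.val).Nonempty := by
  have h1 : interior a.val ⊆ interior b.val := interior_mono h
  obtain ⟨x, hx⟩ := a.int_nonempty
  exact ⟨x, hx, h1 hx⟩

lemma Region.int_int_nonempty' {a b : Region} (h : b.val ⊆ a.val) :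
    (interior a.val ∩ interior b.val).Nonempty := by
  obtain ⟨x, hx1, hx2⟩ := Region.int_int_nonempty h
  exact ⟨x, hx2, hx1⟩

/-- the 8 basic RCC-8 relations are jointly exhaustive and
pairwise disjoint: exactly one of them holds between any two regions. -/
theorem rcc8_JEPD (a b : Region) : ∃! r : RCC8, r.holds a b := by
  have uniq : ∀ r s : RCC8, r.holds a b → s.holds a b → s = r := by
    have HA := a.not_subset_interior_self
    have HB := b.not_subset_interior_self
    have hane := a.2.1
    have hbne := b.2.1
    intro r s hr hs
    cases r <;> cases s <;> first
    | rfl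
    | (exfalso; simp only [RCC8.holds] at hr hs
       first
       | -- DC vs nonempty-intersection relations
         (obtain ⟨x, hx⟩ : (a.val ∩ b.val).Nonempty := by
            first
            | exact hr.1
            | exact hs.1
            | exact hr.2.2.mono (Set.inter_subset_inter interior_subset interior_subset)
            | exact hs.2.2.mono (Set.inter_subset_inter interior_subset interior_subset)
            | (obtain ⟨x, hx⟩ := hane
               first
               | exact ⟨x, hx, hr.1 hx⟩
               | exact ⟨x, hx, hs.1 hx⟩
               | exact ⟨x, hx, interior_subset (hr hx)⟩
               | exact ⟨x, hx, interior_subset (hs hx)⟩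
               | exact ⟨x, hx, hr ▸ hx⟩
               | exact ⟨x, hx, hs ▸ hx⟩)
            | (obtain ⟨x, hx⟩ := hbne
               first
               | exact ⟨x, hr.1 hx, hx⟩
               | exact ⟨x, hs.1 hx, hx⟩
               | exact ⟨x, interior_subset (hr hx), hx⟩
               | exact ⟨x, interior_subset (hs hx), hx⟩
               | exact ⟨x, hr ▸ hx, hx⟩
               | exact ⟨x, hs ▸ hx, hx⟩)
          first
          | exact Set.Nonempty.ne_empty ⟨x, hx⟩ hr
          | exact Set.Nonempty.ne_empty ⟨x, hx⟩ hs)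
       | -- EC vs relations with overlapping interiors
         (have hii : (interior a.val ∩ interior b.val).Nonempty := by
            first
            | exact hr.2.2
            | exact hs.2.2
            | exact Region.int_int_nonempty hr.1
            | exact Region.int_int_nonempty hs.1
            | exact Region.int_int_nonempty (fun _ hx => interior_subset (hr hx))
            | exact Region.int_int_nonempty (fun _ hx => interior_subset (hs hx))
            | exact Region.int_int_nonempty (le_of_eq hr)
            | exact Region.int_int_nonempty (le_of_eq hs)
            | exact Region.int_int_nonempty (ge_of_eq hr)
            | exact Region.int_int_nonempty (ge_of_eq hs)
            | exact Region.int_int_nonempty' hr.1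
            | exact Region.int_int_nonempty' hs.1
            | exact Region.int_int_nonempty' (fun _ hx => interior_subset (hr hx))
            | exact Region.int_int_nonempty' (fun _ hx => interior_subset (hs hx))
          first
          | exact hii.ne_empty hr.2
          | exact hii.ne_empty hs.2)
       | -- PO vs containment relations
         (first
          | exact hr.1 hs.1
          | exact hs.1 hr.1
          | exact hr.2.1 hs.1
          | exact hs.2.1 hr.1
          | exact hr.1 (fun _ hx => interior_subset (hs hx))
          | exact hs.1 (fun _ hx => interior_subset (hr hx))
          | exact hr.2.1 (fun _ hx => interior_subset (hs hx))
          | exact hs.2.1 (fun _ hx => interior_subset (hr hx))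
          | exact hr.1 (le_of_eq hs)
          | exact hs.1 (le_of_eq hr)
          | exact hr.2.1 (le_of_eq hs)
          | exact hs.2.1 (le_of_eq hr)
          | exact hr.1 (ge_of_eq hs)
          | exact hs.1 (ge_of_eq hr)
          | exact hr.2.1 (ge_of_eq hs)
          | exact hs.2.1 (ge_of_eq hr))
       | -- TPP vs NTPP / EQ
         (first
          | exact hr.2.2 hs
          | exact hs.2.2 hr
          | exact hr.2.1 hs
          | exact hs.2.1 hr
          | exact hr.2.1 hs.symm
          | exact hs.2.1 hr.symm)
       | -- TPP vs TPPi: a ⊆ b ∧ b ⊆ a with a ≠ b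
         (exact hr.2.1 (Set.Subset.antisymm hr.1 hs.1))
       | -- cases forcing a.val = b.val and x ⊆ interior x
         (have hab : a.val = b.val := by
            first
            | exact Set.Subset.antisymm (fun _ hx => interior_subset (hr hx)) (fun _ hx => interior_subset (hs hx))
            | exact Set.Subset.antisymm (fun _ hx => interior_subset (hs hx)) (fun _ hx => interior_subset (hr hx))
            | exact Set.Subset.antisymm (fun _ hx => interior_subset (hr hx)) hs.1
            | exact Set.Subset.antisymm (fun _ hx => interior_subset (hs hx)) hr.1
            | exact Set.Subset.antisymm hr.1 (fun _ hx => interior_subset (hs hx))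
            | exact Set.Subset.antisymm hs.1 (fun _ hx => interior_subset (hr hx))
            | exact hr
            | exact hs
            | exact hr.symm
            | exact hs.symm
          first
          | exact HA (hab ▸ hr)
          | exact HA (hab ▸ hs)
          | exact HB (hab ▸ hr)
          | exact HB (hab ▸ hs)
          | exact HA (fun x hx => hr (hab ▸ hx))
          | exact HA (fun x hx => hs (hab ▸ hx))
          | exact HB (fun x hx => hr (hab.symm ▸ hx))
          | exact HB (fun x hx => hs (hab.symm ▸ hx))))
  by_cases hdc : a.val ∩ b.val = ∅
  · exact ⟨.DC, hdc, fun s hs => uniq .DC s hdc hs⟩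
  by_cases hec : interior a.val ∩ interior b.val = ∅
  · refine ⟨.EC, ⟨Set.nonempty_iff_ne_empty.mpr hdc, hec⟩, fun s hs => uniq .EC s ⟨Set.nonempty_iff_ne_empty.mpr hdc, hec⟩ hs⟩
  by_cases hab : a.val ⊆ b.val
  · by_cases hba : b.val ⊆ a.val
    · have : RCC8.holds .EQ a b := Set.Subset.antisymm hab hba
      exact ⟨.EQ, this, fun s hs => uniq .EQ s this hs⟩
    · by_cases hint : a.val ⊆ interior b.val
      · exact ⟨.NTPP, hint, fun s hs => uniq .NTPP s hint hs⟩
      · have : RCC8.holds .TPP a b := ⟨hab, fun h => hba (le_of_eq h.symm), hint⟩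
        exact ⟨.TPP, this, fun s hs => uniq .TPP s this hs⟩
  · by_cases hba : b.val ⊆ a.val
    · by_cases hint : b.val ⊆ interior a.val
      · exact ⟨.NTPPi, hint, fun s hs => uniq .NTPPi s hint hs⟩
      · have : RCC8.holds .TPPi a b := ⟨hba, fun h => hab (le_of_eq h.symm), hint⟩
        exact ⟨.TPPi, this, fun s hs => uniq .TPPi s this hs⟩
    · have : RCC8.holds .PO a b := ⟨hab, hba, Set.nonempty_iff_ne_empty.mpr hec⟩
      exact ⟨.PO, this, fun s hs => uniq .PO s this hs⟩
end
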